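/- Let $n \ge 2$, $d \ge 2$, $l \in \{2,\dots,d\}$, and let $X \in \mathbb{R}^{n \times d}$ be the Case-2 matrix with rows $X_1 = -\tfrac{1}{\sqrt{2}} e_1 + \tfrac{1}{\sqrt{2}} e_l$ and $X_i = \tfrac{1}{\sqrt{2}} e_1 + \tfrac{1}{\sqrt{2}} e_l$ for all $i \in \{2,\dots,n\}$. Let $0 < \varepsilon < 0.01$ and let $\bar{w} \in \mathbb{R}^d$ satisfy $\max_{i \in \{1,\dots,n\}} \|\bar{w} - X_i\|^2 \le \tfrac{1}{2} + \varepsilon$. Then $\bar{w}_l > \tfrac{3\sqrt{2}}{8}$ and $|\bar{w}_j| < 0.1$ for every coordinate $j \ne l$. -/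
import Mathlib
set_option maxHeartbeats 1000000

lemma coord_le_norm {d : ℕ} (x : EuclideanSpace ℝ (Fin d)) (j : Fin d) : |x j| ≤ ‖x‖ := by
  rw [EuclideanSpace.norm_eq]
  have h : |x j| = Real.sqrt (|x j| ^ 2) := (Real.sqrt_sq (abs_nonneg _)).symm
  rw [h]
  apply Real.sqrt_le_sqrt
  rw [sq_abs]
  have := Finset.single_le_sum (f := fun i => ‖x i‖ ^ 2) (fun i _ => sq_nonneg _)
    (Finset.mem_univ j)
  simpa [Real.norm_eq_abs, sq_abs] using this

/-- Decoding step of the minimum-enclosing-ball lower bound, Case 2: any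
`ε`-approximate center has a unique large coordinate, revealing the hidden
column index `l`. -/
theorem case2_meb_decoding (n d : ℕ) (hn : 2 ≤ n) (hd : 2 ≤ d)
    (l : Fin d) (hl : (l : ℕ) ≠ 0)
    (X : Fin n → EuclideanSpace ℝ (Fin d))
    (hX1 : ∀ i : Fin n, (i : ℕ) = 0 →
      X i = -((Real.sqrt 2)⁻¹ • EuclideanSpace.single (⟨0, by omega⟩ : Fin d) (1 : ℝ))
        + (Real.sqrt 2)⁻¹ • EuclideanSpace.single l (1 : ℝ))
    (hXi : ∀ i : Fin n, (i : ℕ) ≠ 0 →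
      X i = (Real.sqrt 2)⁻¹ • EuclideanSpace.single (⟨0, by omega⟩ : Fin d) (1 : ℝ)
        + (Real.sqrt 2)⁻¹ • EuclideanSpace.single l (1 : ℝ))
    (ε : ℝ) (hε0 : 0 < ε) (hε1 : ε < 0.01)
    (wbar : EuclideanSpace ℝ (Fin d))
    (happrox : ∀ i : Fin n, ‖wbar - X i‖ ^ 2 ≤ 1 / 2 + ε) :
    wbar l > 3 * Real.sqrt 2 / 8 ∧ ∀ j : Fin d, j ≠ l → |wbar j| < 0.1 := by
  have hs2 : Real.sqrt 2 ^ 2 = 2 := Real.sq_sqrt (by norm_num)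
  have hs2pos : (0:ℝ) < Real.sqrt 2 := Real.sqrt_pos.mpr (by norm_num)
  set c : ℝ := (Real.sqrt 2)⁻¹ with hc
  have hcpos : 0 < c := by positivity
  have hcs : c * Real.sqrt 2 = 1 := inv_mul_cancel₀ (ne_of_gt hs2pos)
  set e0 : EuclideanSpace ℝ (Fin d) := EuclideanSpace.single (⟨0, by omega⟩ : Fin d) (1 : ℝ)
    with he0
  set el : EuclideanSpace ℝ (Fin d) := EuclideanSpace.single l (1 : ℝ) with hel
  set u : EuclideanSpace ℝ (Fin d) := wbar - c • el with hu
  set p : EuclideanSpace ℝ (Fin d) := c • e0 with hp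
  have h1 := happrox ⟨0, by omega⟩
  have h2 := happrox ⟨1, by omega⟩
  rw [hX1 ⟨0, by omega⟩ rfl] at h1
  rw [hXi ⟨1, by omega⟩ (by simp)] at h2
  have e1 : wbar - (-(c • e0) + c • el) = u + p := by rw [hu, hp]; abel
  have e2 : wbar - (c • e0 + c • el) = u - p := by rw [hu, hp]; abel
  rw [e1] at h1
  rw [e2] at h2
  have hpn : ‖p‖ = c := by
    rw [hp, norm_smul, he0, EuclideanSpace.norm_single]
    simp [abs_of_pos hcpos]
  have hpn2 : ‖p‖ * ‖p‖ = 1 / 2 := by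
    rw [hpn]
    nlinarith [hcs, hs2, hcpos]
  have hpar := parallelogram_law_with_norm ℝ u p
  rw [pow_two] at h1 h2
  have hun2 : ‖u‖ ^ 2 ≤ ε := by
    rw [pow_two]
    linarith
  have hcoord : ∀ j : Fin d, |u j| ^ 2 ≤ ε := by
    intro j
    have h := coord_le_norm u j
    have h2 : |u j| ^ 2 ≤ ‖u‖ ^ 2 := pow_le_pow_left₀ (abs_nonneg _) h 2
    linarith
  have hsmall : ∀ j : Fin d, |u j| < 0.1 := by
    intro j
    have := hcoord j
    nlinarith [abs_nonneg (u j)]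
  have h14 : Real.sqrt 2 > 1.4 := by nlinarith
  have h15 : Real.sqrt 2 < 1.42 := by nlinarith
  constructor
  · have hul : u l = wbar l - c := by
      rw [hu, hel]
      simp [EuclideanSpace.single_apply]
    have hsl := hsmall l
    rw [hul] at hsl
    have habs := abs_lt.mp hsl
    nlinarith [habs.1, hcs, hcpos]
  · intro j hj
    have huj : u j = wbar j := by
      rw [hu, hel]
      simp [EuclideanSpace.single_apply, hj]
    have := hsmall j
    rwa [huj] at this
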